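/- Let f, g, h : ℝ → ℝ with h twice differentiable, h' and h'' never zero, f', g' never zero, and suppose that for all u, v, w: -3H₀·h''(w)/(h'(w))² = (h''/h')'(w)·[1 + 1/(f'(u))² + 1/(g'(v))²], where H₀ ≠ 0 and f'' never zero (so 1/(f')² is nonconstant). Then a contradiction follows; i.e., no such functions exist. -/

import Mathlib

/-- Nonexistence step in the CMC classification of type 3 translation hypersurfaces
in 𝕀⁴. -/
theorem stmt_11 (f g h : ℝ → ℝ) (H₀ : ℝ) (hH₀ : H₀ ≠ 0)
    (hh : Differentiable ℝ h) (hh' : Differentiable ℝ (deriv h))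
    (hhne : ∀ w, deriv h w ≠ 0) (hhne2 : ∀ w, deriv (deriv h) w ≠ 0)
    (hfne : ∀ u, deriv f u ≠ 0) (hgne : ∀ v, deriv g v ≠ 0)
    (hfne2 : ∀ u, deriv (deriv f) u ≠ 0)
    (heq : ∀ u v w : ℝ,
      -3 * H₀ * deriv (deriv h) w / (deriv h w) ^ 2
        = deriv (fun x => deriv (deriv h) x / deriv h x) w
            * (1 + 1 / (deriv f u) ^ 2 + 1 / (deriv g v) ^ 2)) :
    False := by
  by_cases hc : ∀ u, (deriv f u) ^ 2 = (deriv f 0) ^ 2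
  · -- f'² constant, but its derivative 2 f' f'' ≠ 0
    have hfd : DifferentiableAt ℝ (deriv f) 0 :=
      differentiableAt_of_deriv_ne_zero (hfne2 0)
    have hpow : HasDerivAt (fun u => (deriv f u) ^ 2)
        ((2 : ℕ) * (deriv f 0) ^ (2 - 1) * deriv (deriv f) 0) 0 :=
      (hfd.hasDerivAt).pow 2
    have hconst : (fun u => (deriv f u) ^ 2) = fun _ => (deriv f 0) ^ 2 :=
      funext hc
    have h0 : deriv (fun u => (deriv f u) ^ 2) 0 = 0 := by
      rw [hconst]; simp
    have := hpow.deriv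
    rw [h0] at this
    have : (2 : ℝ) * (deriv f 0) ^ (2 - 1) * deriv (deriv f) 0 = 0 := by
      exact_mod_cast this.symm
    simp at this
    rcases this with h1 | h1
    · exact hfne 0 h1
    · exact hfne2 0 h1
  · push_neg at hc
    obtain ⟨u, hu⟩ := hc
    have hdiff : 1 / (deriv f u) ^ 2 ≠ 1 / (deriv f 0) ^ 2 := by
      intro hEq
      apply hu
      have h1 : (deriv f u) ^ 2 ≠ 0 := pow_ne_zero _ (hfne u)
      have h2 : (deriv f 0) ^ 2 ≠ 0 := pow_ne_zero _ (hfne 0)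
      field_simp at hEq
      exact inv_injective (by rwa [one_div, one_div] at hEq)
    have hD : ∀ w, deriv (fun x => deriv (deriv h) x / deriv h x) w = 0 := by
      intro w
      have e1 := heq u 0 w
      have e2 := heq 0 0 w
      by_contra hne
      have := e1.symm.trans e2
      have h3 : (1 + 1 / (deriv f u) ^ 2 + 1 / (deriv g 0) ^ 2)
          = (1 + 1 / (deriv f 0) ^ 2 + 1 / (deriv g 0) ^ 2) :=
        mul_left_cancel₀ hne this
      apply hdiff
      linarith
    have e := heq 0 0 0
    rw [hD 0, zero_mul, div_eq_zero_iff] at e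
    rcases e with e | e
    · have h2 := hhne2 0
      have := hH₀
      rcases mul_eq_zero.1 e with e' | e'
      · rcases mul_eq_zero.1 e' with e'' | e''
        · norm_num at e''
        · exact hH₀ e''
      · exact h2 e'
    · exact hhne 0 (pow_eq_zero_iff (by norm_num) |>.1 e)
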